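/- For all complex numbers z = x + iy with x ≥ 1/2, the reciprocal of the Gamma function satisfies |1/Γ(x+iy)| ≤ √(cosh(πy)) / Γ(x). -/

import Mathlib

open Complex Real

private lemma gamma_half_norm_sq (y : ℝ) :
    ‖Complex.Gamma (↑((1:ℝ)/2) + y * Complex.I)‖^2 = π / Real.cosh (π * y) := by
  set w : ℂ := (↑((1:ℝ)/2) + y * Complex.I) with hw
  have h1 : Complex.Gamma w * Complex.Gamma (1 - w) = π / Complex.sin (π * w) :=
    Complex.Gamma_mul_Gamma_one_sub w
  have h2 : (1 : ℂ) - w = starRingEnd ℂ w := by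
    simp [hw, Complex.ext_iff]; norm_num
  rw [h2, Complex.Gamma_conj, Complex.mul_conj, Complex.normSq_eq_norm_sq] at h1
  have h3 : Complex.sin (π * w) = (Real.cosh (π * y) : ℂ) := by
    have : (π : ℂ) * w = π/2 + (π * y : ℝ) * Complex.I := by
      push_cast [hw]; ring
    rw [this, Complex.sin_add, Complex.sin_pi_div_two, Complex.cos_pi_div_two,
      Complex.cos_mul_I, Complex.ofReal_cosh]
    ring
  rw [h3] at h1
  rw [← Complex.ofReal_div] at h1
  exact_mod_cast h1

private lemma gammaSeq_ratio_le (x y : ℝ) (hx : (1:ℝ)/2 ≤ x) (n : ℕ) (hn : n ≠ 0) :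
    Real.GammaSeq x n * ‖Complex.GammaSeq (↑((1:ℝ)/2) + y * Complex.I) n‖ ≤
      Real.GammaSeq ((1:ℝ)/2) n * ‖Complex.GammaSeq (x + y * Complex.I) n‖ := by
  have hx0 : (0:ℝ) < x := lt_of_lt_of_le (by norm_num) hx
  have hnorm : ∀ t : ℝ, 0 < t →
      ‖Complex.GammaSeq (t + y * Complex.I) n‖
        = (n:ℝ) ^ t * (n.factorial : ℝ) / ∏ j ∈ Finset.range (n + 1), Real.sqrt ((t + j)^2 + y^2) := by
    intro t ht
    rw [Complex.GammaSeq, norm_div, norm_mul, norm_prod]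
    congr 1
    · congr 1
      · rw [show ((n:ℂ)) = (((n:ℝ)):ℂ) by push_cast; ring,
          Complex.norm_cpow_eq_rpow_re_of_pos (by exact_mod_cast Nat.pos_of_ne_zero hn)]
        simp
      · simp
    · refine Finset.prod_congr rfl fun j _ => ?_
      rw [show (t:ℂ) + y * Complex.I + j = ((t + j : ℝ) : ℂ) + (y:ℝ) * Complex.I by
        push_cast; ring]
      rw [Complex.norm_add_mul_I]
  rw [hnorm x hx0, hnorm (1/2) (by norm_num), Real.GammaSeq, Real.GammaSeq]
  rw [div_mul_div_comm, div_mul_div_comm]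
  have hkey : ∀ j : ℕ, ((1:ℝ)/2 + j) * Real.sqrt ((x + j)^2 + y^2)
      ≤ (x + j) * Real.sqrt (((1:ℝ)/2 + j)^2 + y^2) := by
    intro j
    have ha : (0:ℝ) ≤ 1/2 + j := by positivity
    have hc : (0:ℝ) ≤ x + j := by positivity
    have h1 : (1/2 + (j:ℝ)) * Real.sqrt ((x + j)^2 + y^2)
        = Real.sqrt ((1/2 + j)^2 * ((x + j)^2 + y^2)) := by
      rw [Real.sqrt_mul (sq_nonneg _), Real.sqrt_sq ha]
    have h2 : (x + (j:ℝ)) * Real.sqrt ((1/2 + j)^2 + y^2)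
        = Real.sqrt ((x + j)^2 * ((1/2 + j)^2 + y^2)) := by
      rw [Real.sqrt_mul (sq_nonneg _), Real.sqrt_sq hc]
    rw [h1, h2]
    apply Real.sqrt_le_sqrt
    have hle : (1/2 + (j:ℝ)) ≤ x + j := by linarith
    nlinarith [mul_le_mul_of_nonneg_right (mul_self_le_mul_self ha hle) (sq_nonneg y)]
  have hnd : (0:ℝ) < ∏ j ∈ Finset.range (n+1), (((1:ℝ)/2 + j) * Real.sqrt ((x + j)^2 + y^2)) := by
    apply Finset.prod_pos; intro j _
    have : (0:ℝ) < (x + j)^2 + y^2 := by positivity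
    positivity
  have hprods : (∏ j ∈ Finset.range (n+1), ((1:ℝ)/2 + j)) * ∏ j ∈ Finset.range (n+1), Real.sqrt ((x + j)^2 + y^2)
      ≤ (∏ j ∈ Finset.range (n+1), (x + j)) * ∏ j ∈ Finset.range (n+1), Real.sqrt (((1:ℝ)/2 + j)^2 + y^2) := by
    rw [← Finset.prod_mul_distrib, ← Finset.prod_mul_distrib]
    apply Finset.prod_le_prod
    · intro j _; positivity
    · intro j _; exact hkey j
  rw [show (n:ℝ)^((1:ℝ)/2) * (n.factorial:ℝ) * ((n:ℝ)^x * (n.factorial:ℝ))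
      = (n:ℝ)^x * (n.factorial:ℝ) * ((n:ℝ)^((1:ℝ)/2) * (n.factorial:ℝ)) from by ring]
  have hDpos : (0:ℝ) < (∏ j ∈ Finset.range (n+1), ((1:ℝ)/2 + j)) *
      ∏ j ∈ Finset.range (n+1), Real.sqrt ((x + j)^2 + y^2) := by
    rw [← Finset.prod_mul_distrib]; exact hnd
  gcongr

/-- For all complex numbers `z = x + iy` with `x ≥ 1/2`, the reciprocal of the Gamma
function satisfies `|1/Γ(x+iy)| ≤ √(cosh(πy)) / Γ(x)`. -/
theorem gamma_reciprocal_bound (x y : ℝ) (hx : (1:ℝ)/2 ≤ x) :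
    ‖(Complex.Gamma (x + y * Complex.I))⁻¹‖ ≤
      Real.sqrt (Real.cosh (π * y)) / Real.Gamma x := by
  have hx0 : (0:ℝ) < x := lt_of_lt_of_le (by norm_num) hx
  have hΓx : 0 < Real.Gamma x := Real.Gamma_pos_of_pos hx0
  set z : ℂ := (x : ℂ) + y * Complex.I with hz
  set w : ℂ := (↑((1:ℝ)/2) + y * Complex.I) with hw
  have hzne : Complex.Gamma z ≠ 0 := by
    apply Complex.Gamma_ne_zero
    intro m h
    have : z.re = x := by simp [hz]
    rw [h] at this
    simp at this
    have : (0:ℝ) ≤ m := m.cast_nonneg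
    linarith
  have hnz : 0 < ‖Complex.Gamma z‖ := norm_pos_iff.2 hzne
  have hmain : Real.Gamma x * ‖Complex.Gamma w‖ ≤ Real.Gamma (1/2) * ‖Complex.Gamma z‖ := by
    refine le_of_tendsto_of_tendsto
      ((Real.GammaSeq_tendsto_Gamma x).mul (Complex.GammaSeq_tendsto_Gamma w).norm)
      ((Real.GammaSeq_tendsto_Gamma (1/2)).mul (Complex.GammaSeq_tendsto_Gamma z).norm) ?_
    filter_upwards [Filter.eventually_ge_atTop 1] with n hn
    exact gammaSeq_ratio_le x y hx n (Nat.one_le_iff_ne_zero.mp hn)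
  have hcosh : (0:ℝ) < Real.cosh (π * y) := Real.cosh_pos _
  have hpi : (0:ℝ) < Real.sqrt π := Real.sqrt_pos.2 Real.pi_pos
  have hc : (0:ℝ) < Real.sqrt (Real.cosh (π * y)) := Real.sqrt_pos.2 hcosh
  have hwnorm : ‖Complex.Gamma w‖ = Real.sqrt π / Real.sqrt (Real.cosh (π * y)) := by
    rw [← Real.sqrt_sq (norm_nonneg (Complex.Gamma w)), gamma_half_norm_sq y,
      Real.sqrt_div Real.pi_pos.le]
  rw [hwnorm, Real.Gamma_one_half_eq] at hmain
  rw [norm_inv, inv_eq_one_div, div_le_div_iff₀ hnz hΓx, one_mul]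
  calc Real.Gamma x
      = (Real.Gamma x * (Real.sqrt π / Real.sqrt (Real.cosh (π * y)))) *
        (Real.sqrt (Real.cosh (π * y)) / Real.sqrt π) := by field_simp
    _ ≤ (Real.sqrt π * ‖Complex.Gamma z‖) * (Real.sqrt (Real.cosh (π * y)) / Real.sqrt π) :=
        mul_le_mul_of_nonneg_right hmain (by positivity)
    _ = Real.sqrt (Real.cosh (π * y)) * ‖Complex.Gamma z‖ := by field_simp
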